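/- For all x > 0 and ν > 3/2, K_{ν−1}(x)/K_ν(x) < x/(ν − 1/2 + √((ν − 3/2)² + x²)). Equality holds when ν = 3/2, and the inequality is reversed for ν < 3/2. -/

import Mathlib

open Real MeasureTheory Set Filter Topology

/-- Modified Bessel function of the second kind. -/
noncomputable def besselK (ν x : ℝ) : ℝ :=
  ∫ t in Set.Ioi (0:ℝ), Real.exp (-x * Real.cosh t) * Real.cosh (ν * t)

noncomputable def fB (ν x : ℝ) : ℝ :=
  x * besselK (ν-1) x ^ 2 + (2*ν-1) * (besselK (ν-1) x * besselK ν x) - x * besselK ν x ^ 2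


lemma quad_le_cosh (t : ℝ) : 1 + t ^ 2 / 2 ≤ Real.cosh t := by
  have h1 : Real.cosh t = 2 * Real.sinh (t/2) ^ 2 + 1 := by
    have := Real.cosh_sq (t/2)
    have h2 := Real.cosh_two_mul (t/2)
    have : (2 : ℝ) * (t/2) = t := by ring
    rw [this] at h2
    nlinarith [Real.cosh_sq (t/2)]
  have h3 : (t/2) ^ 2 ≤ Real.sinh (t/2) ^ 2 := by
    rcases le_or_gt 0 t with ht | ht
    · have : t/2 ≤ Real.sinh (t/2) := by
        rcases eq_or_lt_of_le ht with rfl | ht'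
        · simp
        · exact (Real.self_lt_sinh_iff.2 (by linarith)).le
      nlinarith [Real.sinh_nonneg_iff.2 (by linarith : (0:ℝ) ≤ t/2)]
    · have : Real.sinh (t/2) ≤ t/2 := by
        exact (Real.sinh_lt_self_iff.2 (by linarith)).le
      nlinarith [Real.sinh_nonpos_iff.2 (by linarith : t/2 ≤ (0:ℝ))]
  nlinarith

/-- Master integrability lemma. -/
lemma integrable_master {x : ℝ} (hx : 0 < x) {g : ℝ → ℝ} (hg : Continuous g) {c : ℝ}
    (hb : ∀ t : ℝ, 0 ≤ t → |g t| ≤ Real.exp (c * t)) :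
    IntegrableOn (fun t => Real.exp (-x * Real.cosh t) * g t) (Set.Ioi (0:ℝ)) := by
  have hmaj : Integrable (fun t : ℝ => Real.exp (c^2/x - x) * Real.exp (-(x/4) * t^2)) := by
    exact (integrable_exp_neg_mul_sq (by positivity)).const_mul _
  refine Integrable.mono' (hmaj.restrict (s := Set.Ioi 0)) ?_ ?_
  · exact ((Real.continuous_exp.comp (continuous_const.mul Real.continuous_cosh)).mul hg).aestronglyMeasurable
  · rw [ae_restrict_iff' measurableSet_Ioi]
    refine ae_of_all _ (fun t ht => ?_)
    have ht0 : (0:ℝ) ≤ t := le_of_lt ht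
    have h1 : |Real.exp (-x * Real.cosh t) * g t| ≤ Real.exp (-x * Real.cosh t) * Real.exp (c * t) := by
      rw [abs_mul, abs_of_pos (Real.exp_pos _)]
      exact mul_le_mul_of_nonneg_left (hb t ht0) (Real.exp_pos _).le
    refine h1.trans ?_
    rw [← Real.exp_add, ← Real.exp_add]
    apply Real.exp_le_exp.2
    have hcosh := quad_le_cosh t
    have hAM : c * t - (x/4) * t^2 ≤ c^2/x := by
      rw [le_div_iff₀ hx]
      nlinarith [sq_nonneg (x*t/2 - c)]
    nlinarith [mul_le_mul_of_nonneg_left hcosh hx.le]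

lemma abs_cosh_le (a : ℝ) : |Real.cosh a| ≤ Real.exp |a| := by
  rw [abs_of_pos (Real.cosh_pos a), ← Real.cosh_abs, Real.cosh_eq]
  have h1 : Real.exp (-|a|) ≤ Real.exp |a| := Real.exp_le_exp.2 (neg_le_self (abs_nonneg a))
  linarith [Real.exp_pos (-|a|)]

lemma abs_sinh_le (a : ℝ) : |Real.sinh a| ≤ Real.exp |a| := by
  rw [Real.abs_sinh]
  calc Real.sinh |a| ≤ Real.cosh |a| := (Real.sinh_lt_cosh _).le
  _ ≤ Real.exp |a| := by simpa [abs_abs, abs_of_pos (Real.cosh_pos _)] using abs_cosh_le |a|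

lemma integrable_besselK {x : ℝ} (hx : 0 < x) (ν : ℝ) :
    IntegrableOn (fun t => Real.exp (-x * Real.cosh t) * Real.cosh (ν * t)) (Set.Ioi (0:ℝ)) := by
  refine integrable_master hx (Real.continuous_cosh.comp (continuous_const.mul continuous_id)) (c := |ν|) (fun t ht => ?_)
  simpa [abs_mul, abs_of_nonneg ht] using abs_cosh_le (ν * t)

lemma integrable_sinh_sinh {x : ℝ} (hx : 0 < x) (ν : ℝ) :
    IntegrableOn (fun t => Real.exp (-x * Real.cosh t) * (Real.sinh t * Real.sinh (ν * t))) (Set.Ioi (0:ℝ)) := by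
  refine integrable_master hx (Real.continuous_sinh.mul (Real.continuous_sinh.comp (continuous_const.mul continuous_id))) (c := 1 + |ν|) (fun t ht => ?_)
  have h1 := abs_sinh_le t
  have h2 := abs_sinh_le (ν * t)
  rw [abs_mul]
  calc |Real.sinh t| * |Real.sinh (ν * t)| ≤ Real.exp |t| * Real.exp |ν * t| :=
        mul_le_mul h1 h2 (abs_nonneg _) (Real.exp_pos _).le
  _ = Real.exp ((1 + |ν|) * t) := by
        rw [← Real.exp_add, abs_of_nonneg ht, abs_mul, abs_of_nonneg ht]; ring_nf
  _ ≤ Real.exp ((1 + |ν|) * t) := le_refl _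

lemma integrable_cosh_cosh {x : ℝ} (hx : 0 < x) (ν : ℝ) :
    IntegrableOn (fun t => Real.exp (-x * Real.cosh t) * (Real.cosh t * Real.cosh (ν * t))) (Set.Ioi (0:ℝ)) := by
  refine integrable_master hx (Real.continuous_cosh.mul (Real.continuous_cosh.comp (continuous_const.mul continuous_id))) (c := 1 + |ν|) (fun t ht => ?_)
  have h1 := abs_cosh_le t
  have h2 := abs_cosh_le (ν * t)
  rw [abs_mul]
  calc |Real.cosh t| * |Real.cosh (ν * t)| ≤ Real.exp |t| * Real.exp |ν * t| :=
        mul_le_mul h1 h2 (abs_nonneg _) (Real.exp_pos _).le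
  _ = Real.exp ((1 + |ν|) * t) := by
        rw [← Real.exp_add, abs_of_nonneg ht, abs_mul, abs_of_nonneg ht]; ring_nf

lemma besselK_pos {x : ℝ} (hx : 0 < x) (ν : ℝ) : 0 < besselK ν x := by
  rw [besselK]
  rw [setIntegral_pos_iff_support_of_nonneg_ae]
  · have : (Function.support fun t => Real.exp (-x * Real.cosh t) * Real.cosh (ν * t)) = Set.univ := by
      ext t
      simp only [Function.mem_support, Set.mem_univ, iff_true]
      positivity
    rw [this]
    simp [Real.volume_Ioi]
  · refine ae_of_all _ (fun t => ?_)
    positivity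
  · exact integrable_besselK hx ν

/-- exp decay helper -/
lemma tendsto_exp_quad {x : ℝ} (hx : 0 < x) (k : ℝ) :
    Tendsto (fun t : ℝ => Real.exp (k - (x/4) * t^2)) atTop (𝓝 0) := by
  apply Real.tendsto_exp_atBot.comp
  apply tendsto_atBot_add_const_left
  have h2 : Tendsto (fun t : ℝ => t^2) atTop atTop := tendsto_pow_atTop (by norm_num)
  have := h2.const_mul_atTop (by positivity : (0:ℝ) < x/4)
  simpa [neg_mul] using (tendsto_neg_atBot_iff.2 this)

/-- the pointwise bound used repeatedly: |e^{-x cosh t} e^{ct}| ≤ e^{c²/x - x} e^{-(x/4)t²} -/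
lemma exp_cosh_bound {x : ℝ} (hx : 0 < x) (c t : ℝ) (ht : 0 ≤ t) :
    Real.exp (-x * Real.cosh t) * Real.exp (c * t) ≤ Real.exp (c^2/x - x - (x/4) * t^2) := by
  rw [← Real.exp_add]
  apply Real.exp_le_exp.2
  have hcosh := quad_le_cosh t
  have hAM : c * t - (x/4) * t^2 ≤ c^2/x := by
    rw [le_div_iff₀ hx]
    nlinarith [sq_nonneg (x*t/2 - c)]
  nlinarith [mul_le_mul_of_nonneg_left hcosh hx.le]

lemma besselK_recurrence {x : ℝ} (hx : 0 < x) (ν : ℝ) :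
    x * (besselK (ν+1) x - besselK (ν-1) x) = 2 * ν * besselK ν x := by
  set g : ℝ → ℝ := fun t => Real.exp (-x * Real.cosh t) * Real.sinh (ν * t) with hg
  set g' : ℝ → ℝ := fun t => ν * (Real.exp (-x * Real.cosh t) * Real.cosh (ν * t))
      - x * (Real.exp (-x * Real.cosh t) * (Real.sinh t * Real.sinh (ν * t))) with hg'
  have hderiv : ∀ t : ℝ, HasDerivAt g (g' t) t := by
    intro t
    have h1 : HasDerivAt (fun t => Real.exp (-x * Real.cosh t)) (-x * Real.sinh t * Real.exp (-x * Real.cosh t)) t := by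
      have := ((Real.hasDerivAt_cosh t).const_mul (-x)).exp
      simpa [mul_comm] using this
    have h2 : HasDerivAt (fun t => Real.sinh (ν * t)) (ν * Real.cosh (ν * t)) t := by
      have := (Real.hasDerivAt_sinh (ν * t)).comp t ((hasDerivAt_id t).const_mul ν)
      simpa [mul_comm, Function.comp_def] using this
    have := h1.mul h2
    refine this.congr_deriv ?_
    simp only [hg']
    ring
  have htend : Tendsto g atTop (𝓝 0) := by
    apply squeeze_zero_norm' (a := fun t => Real.exp (|ν|^2/x - x - (x/4) * t^2))
    · filter_upwards [eventually_ge_atTop (0:ℝ)] with t ht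
      have h1 : ‖g t‖ ≤ Real.exp (-x * Real.cosh t) * Real.exp (|ν| * t) := by
        rw [hg, norm_mul, Real.norm_eq_abs, Real.norm_eq_abs, abs_of_pos (Real.exp_pos _)]
        refine mul_le_mul_of_nonneg_left ?_ (Real.exp_pos _).le
        calc |Real.sinh (ν * t)| ≤ Real.exp |ν * t| := abs_sinh_le _
        _ = Real.exp (|ν| * t) := by rw [abs_mul, abs_of_nonneg ht]
      exact h1.trans (exp_cosh_bound hx |ν| t ht)
    · exact tendsto_exp_quad hx _
  have hint : IntegrableOn g' (Set.Ioi (0:ℝ)) :=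
    ((integrable_besselK hx ν).const_mul ν).sub ((integrable_sinh_sinh hx ν).const_mul x)
  have key := integral_Ioi_of_hasDerivAt_of_tendsto' (f := g) (f' := g') (a := 0)
    (fun t _ => hderiv t) hint htend
  have hg0 : g 0 = 0 := by simp [hg]
  rw [hg0, sub_zero] at key
  -- key : ∫ t in Ioi 0, g' t = 0
  have hsplit : ∫ t in Set.Ioi (0:ℝ), g' t
      = ν * besselK ν x - x * ∫ t in Set.Ioi (0:ℝ), Real.exp (-x * Real.cosh t) * (Real.sinh t * Real.sinh (ν * t)) := by
    rw [hg']
    rw [integral_sub ((integrable_besselK hx ν).const_mul ν) ((integrable_sinh_sinh hx ν).const_mul x),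
      MeasureTheory.integral_const_mul, MeasureTheory.integral_const_mul]
    rfl
  have hprod : ∫ t in Set.Ioi (0:ℝ), Real.exp (-x * Real.cosh t) * (Real.sinh t * Real.sinh (ν * t))
      = (besselK (ν+1) x - besselK (ν-1) x) / 2 := by
    have hid : ∀ t : ℝ, Real.exp (-x * Real.cosh t) * (Real.sinh t * Real.sinh (ν * t))
        = (Real.exp (-x * Real.cosh t) * Real.cosh ((ν+1) * t) - Real.exp (-x * Real.cosh t) * Real.cosh ((ν-1) * t)) / 2 := by
      intro t
      have e1 : (ν+1) * t = ν * t + t := by ring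
      have e2 : (ν-1) * t = ν * t - t := by ring
      rw [e1, e2, Real.cosh_add, Real.cosh_sub]
      ring
    simp_rw [hid]
    rw [integral_div, integral_sub (integrable_besselK hx (ν+1)) (integrable_besselK hx (ν-1))]
    rfl
  rw [hsplit, hprod] at key
  linarith

lemma besselK_hasDerivAt {x : ℝ} (hx : 0 < x) (ν : ℝ) :
    HasDerivAt (fun y => besselK ν y) (-((besselK (ν+1) x + besselK (ν-1) x) / 2)) x := by
  set μ := volume.restrict (Set.Ioi (0:ℝ))
  set F : ℝ → ℝ → ℝ := fun y t => Real.exp (-y * Real.cosh t) * Real.cosh (ν * t) with hF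
  set F' : ℝ → ℝ → ℝ := fun y t => -(Real.cosh t * Real.exp (-y * Real.cosh t) * Real.cosh (ν * t)) with hF'
  have hcont : ∀ y : ℝ, Continuous (F y) := fun y =>
    (Real.continuous_exp.comp (continuous_const.mul Real.continuous_cosh)).mul
      (Real.continuous_cosh.comp (continuous_const.mul continuous_id))
  have hcont' : Continuous (F' x) := by
    apply Continuous.neg
    exact (Real.continuous_cosh.mul (Real.continuous_exp.comp (continuous_const.mul Real.continuous_cosh))).mul
      (Real.continuous_cosh.comp (continuous_const.mul continuous_id))
  have key := hasDerivAt_integral_of_dominated_loc_of_deriv_le (μ := μ) (x₀ := x)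
    (F := F) (F' := F')
    (bound := fun t => Real.cosh t * Real.exp (-(x/2) * Real.cosh t) * Real.cosh (ν * t))
    (Metric.ball_mem_nhds x (half_pos hx))
    (Filter.Eventually.of_forall (fun y => (hcont y).aestronglyMeasurable))
    (integrable_besselK hx ν)
    hcont'.aestronglyMeasurable
    ?_ ?_ ?_
  · have heq : (∫ t, F' x t ∂μ) = -((besselK (ν+1) x + besselK (ν-1) x) / 2) := by
      have hid : ∀ t : ℝ, F' x t
          = -((Real.exp (-x * Real.cosh t) * Real.cosh ((ν+1) * t)
              + Real.exp (-x * Real.cosh t) * Real.cosh ((ν-1) * t)) / 2) := by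
        intro t
        have e1 : (ν+1) * t = ν * t + t := by ring
        have e2 : (ν-1) * t = ν * t - t := by ring
        rw [hF']
        simp only
        rw [e1, e2, Real.cosh_add, Real.cosh_sub]
        ring
      simp_rw [hid]
      rw [integral_neg, integral_div,
        integral_add (integrable_besselK hx (ν+1)) (integrable_besselK hx (ν-1))]
      rfl
    rw [heq] at key
    exact key.2
  · refine ae_of_all _ (fun t => fun y hy => ?_)
    have hy2 : x/2 ≤ y := by
      have := abs_lt.1 (mem_ball_iff_norm.1 hy)
      linarith [this.1]
    rw [hF']
    simp only [norm_neg, norm_mul, Real.norm_eq_abs,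
      abs_of_pos (Real.cosh_pos t), abs_of_pos (Real.exp_pos _), abs_of_pos (Real.cosh_pos (ν*t))]
    have : Real.exp (-y * Real.cosh t) ≤ Real.exp (-(x/2) * Real.cosh t) := by
      apply Real.exp_le_exp.2
      have := Real.cosh_pos t
      nlinarith
    have hc1 := Real.cosh_pos t
    have hc2 := Real.cosh_pos (ν * t)
    nlinarith [mul_le_mul_of_nonneg_left this hc1.le, mul_pos hc1 (Real.exp_pos (-(x/2) * Real.cosh t))]
  · have := integrable_cosh_cosh (half_pos hx) ν
    apply this.congr
    refine ae_of_all _ (fun t => by ring)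
  · refine ae_of_all _ (fun t => fun y hy => ?_)
    have h1 : HasDerivAt (fun y => -y * Real.cosh t) (-Real.cosh t) y := by
      simpa using ((hasDerivAt_id y).neg.mul_const (Real.cosh t))
    have := (h1.exp).mul_const (Real.cosh (ν * t))
    refine this.congr_deriv ?_
    rw [hF']
    ring

lemma besselK_le {x : ℝ} (hx : 1 ≤ x) (ν : ℝ) :
    besselK ν x ≤ Real.exp (-(x-1)) * besselK ν 1 := by
  rw [besselK, besselK, ← MeasureTheory.integral_const_mul]
  apply setIntegral_mono_on (integrable_besselK (by linarith) ν)
    (((integrable_besselK one_pos ν).const_mul _)) measurableSet_Ioi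
  intro t _
  have h1 : Real.exp (-x * Real.cosh t) ≤ Real.exp (-(x-1)) * Real.exp (-1 * Real.cosh t) := by
    rw [← Real.exp_add]
    apply Real.exp_le_exp.2
    nlinarith [Real.one_le_cosh t]
  calc Real.exp (-x * Real.cosh t) * Real.cosh (ν * t)
      ≤ (Real.exp (-(x-1)) * Real.exp (-1 * Real.cosh t)) * Real.cosh (ν * t) :=
        mul_le_mul_of_nonneg_right h1 (Real.cosh_pos _).le
  _ = Real.exp (-(x-1)) * (Real.exp (-1 * Real.cosh t) * Real.cosh (ν * t)) := by ring

lemma tendsto_xKK (a b : ℝ) :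
    Tendsto (fun x => x * besselK a x * besselK b x) atTop (𝓝 0) := by
  apply squeeze_zero_norm' (a := fun x => (besselK a 1 * besselK b 1 * Real.exp 2) * (x * Real.exp (-x) * Real.exp (-x)))
  · filter_upwards [eventually_ge_atTop (1:ℝ)] with x hx
    have hxp : (0:ℝ) < x := by linarith
    have hKa := besselK_pos hxp a
    have hKb := besselK_pos hxp b
    have hKa1 := besselK_pos one_pos a
    have hKb1 := besselK_pos one_pos b
    rw [Real.norm_eq_abs, abs_of_pos (by positivity)]
    have h1 := besselK_le hx a
    have h2 := besselK_le hx b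
    calc x * besselK a x * besselK b x
        ≤ x * (Real.exp (-(x-1)) * besselK a 1) * (Real.exp (-(x-1)) * besselK b 1) := by
          apply mul_le_mul
          · exact mul_le_mul_of_nonneg_left h1 hxp.le
          · exact h2
          · exact hKb.le
          · positivity
    _ = (besselK a 1 * besselK b 1 * Real.exp 2) * (x * Real.exp (-x) * Real.exp (-x)) := by
          have e2 : Real.exp (-(x-1)) * Real.exp (-(x-1)) = Real.exp 2 * (Real.exp (-x) * Real.exp (-x)) := by
            rw [← Real.exp_add, ← Real.exp_add, ← Real.exp_add]
            ring_nf
          linear_combination (x * besselK a 1 * besselK b 1) * e2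
  · have h1 : Tendsto (fun x : ℝ => x * Real.exp (-x)) atTop (𝓝 0) := by
      simpa using Real.tendsto_pow_mul_exp_neg_atTop_nhds_zero 1
    have h2 : Tendsto (fun x : ℝ => Real.exp (-x)) atTop (𝓝 0) := Real.tendsto_exp_neg_atTop_nhds_zero
    have := (h1.mul h2).const_mul (besselK a 1 * besselK b 1 * Real.exp 2)
    simpa [mul_assoc] using this

lemma tendsto_KK (a b : ℝ) :
    Tendsto (fun x => besselK a x * besselK b x) atTop (𝓝 0) := by
  apply squeeze_zero_norm' (a := fun x => x * besselK a x * besselK b x)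
  · filter_upwards [eventually_ge_atTop (1:ℝ)] with x hx
    have hxp : (0:ℝ) < x := by linarith
    have hKa := besselK_pos hxp a
    have hKb := besselK_pos hxp b
    rw [Real.norm_eq_abs, abs_of_pos (by positivity)]
    nlinarith [mul_nonneg (mul_pos hKa hKb).le (by linarith : (0:ℝ) ≤ x - 1)]
  · exact tendsto_xKK a b

lemma fB_hasDerivAt {x : ℝ} (hx : 0 < x) (ν : ℝ) :
    HasDerivAt (fB ν) (-(2*ν-1) * (besselK (ν-1) x * besselK ν x) / x) x := by
  have hA : HasDerivAt (fun y => besselK (ν-1) y)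
      (-((besselK ν x + besselK (ν-2) x) / 2)) x := by
    have := besselK_hasDerivAt hx (ν-1)
    have e1 : ν - 1 + 1 = ν := by ring
    have e2 : ν - 1 - 1 = ν - 2 := by ring
    rwa [e1, e2] at this
  have hB : HasDerivAt (fun y => besselK ν y)
      (-((besselK (ν+1) x + besselK (ν-1) x) / 2)) x := besselK_hasDerivAt hx ν
  set A := besselK (ν-1) x
  set B := besselK ν x
  set P := besselK (ν-2) x
  set Q := besselK (ν+1) x
  have hd : HasDerivAt (fB ν)
      (1 * A ^ 2 + x * (2 * A ^ 1 * (-((B + P) / 2))) + ((2*ν-1) * ((-((B + P) / 2)) * B + A * (-((Q + A) / 2))))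
        - (1 * B ^ 2 + x * (2 * B ^ 1 * (-((Q + A) / 2))))) x := by
    have h1 : HasDerivAt (fun y => y * besselK (ν-1) y ^ 2) (1 * A ^ 2 + x * (2 * A ^ 1 * (-((B + P) / 2)))) x :=
      (hasDerivAt_id x).mul (hA.pow 2)
    have h2 : HasDerivAt (fun y => (2*ν-1) * (besselK (ν-1) y * besselK ν y))
        ((2*ν-1) * ((-((B + P) / 2)) * B + A * (-((Q + A) / 2)))) x := ((hA.mul hB).const_mul _)
    have h3 : HasDerivAt (fun y => y * besselK ν y ^ 2) (1 * B ^ 2 + x * (2 * B ^ 1 * (-((Q + A) / 2)))) x :=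
      (hasDerivAt_id x).mul (hB.pow 2)
    exact (h1.add h2).sub h3
  convert hd using 1
  have hrec1 := besselK_recurrence hx ν
  have hrec2 := besselK_recurrence hx (ν-1)
  have e1 : ν - 1 + 1 = ν := by ring
  have e2 : ν - 1 - 1 = ν - 2 := by ring
  rw [e1, e2] at hrec2
  -- hrec1 : x * (Q - A) = 2 * ν * B ; hrec2 : x * (B - P) = 2 * (ν-1) * A
  have hP : P = B - 2*(ν-1)*A/x := by
    field_simp
    linarith [hrec2]
  have hQ : Q = A + 2*ν*B/x := by
    field_simp
    linarith [hrec1]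
  rw [hP, hQ]
  field_simp
  ring

lemma fB_tendsto (ν : ℝ) : Tendsto (fB ν) atTop (𝓝 0) := by
  have h1 := tendsto_xKK (ν-1) (ν-1)
  have h2 := (tendsto_KK (ν-1) ν).const_mul (2*ν-1)
  have h3 := tendsto_xKK ν ν
  have h := (h1.add h2).sub h3
  have heq : fB ν = fun x => (x * besselK (ν-1) x * besselK (ν-1) x
      + (2*ν-1) * (besselK (ν-1) x * besselK ν x)) - x * besselK ν x * besselK ν x := by
    funext y
    simp only [fB]
    ring
  rw [heq]
  simpa using h

lemma fB_deriv_eq {x : ℝ} (hx : 0 < x) (ν : ℝ) :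
    deriv (fB ν) x = -(2*ν-1) * (besselK (ν-1) x * besselK ν x) / x :=
  (fB_hasDerivAt hx ν).deriv

lemma fB_pos {x : ℝ} (hx : 0 < x) {ν : ℝ} (hν : 1/2 < ν) : 0 < fB ν x := by
  have hanti : StrictAntiOn (fB ν) (Set.Ioi 0) := by
    apply strictAntiOn_of_deriv_neg (convex_Ioi 0)
    · exact fun y hy => (fB_hasDerivAt hy ν).continuousAt.continuousWithinAt
    · intro y hy
      rw [interior_Ioi] at hy
      rw [fB_deriv_eq hy ν]
      have := besselK_pos hy (ν-1)
      have := besselK_pos hy ν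
      have hy0 : (0:ℝ) < y := hy
      have h1 : 0 < 2*ν-1 := by linarith
      have h3 : 0 < (2*ν-1) * (besselK (ν-1) y * besselK ν y) / y :=
        div_pos (mul_pos h1 (mul_pos (by assumption) (by assumption))) hy0
      have h4 : -(2*ν-1) * (besselK (ν-1) y * besselK ν y) / y
          = -((2*ν-1) * (besselK (ν-1) y * besselK ν y) / y) := by ring
      rw [h4]
      linarith
  have h1 : fB ν (x+1) < fB ν x := hanti (Set.mem_Ioi.2 hx) (Set.mem_Ioi.2 (by linarith)) (lt_add_one x)
  have h2 : 0 ≤ fB ν (x+1) := by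
    refine le_of_tendsto (fB_tendsto ν) ?_
    filter_upwards [eventually_ge_atTop (x+1)] with y hy
    rcases eq_or_lt_of_le hy with rfl | hy'
    · exact le_refl _
    · exact (hanti (Set.mem_Ioi.2 (by linarith)) (Set.mem_Ioi.2 (by linarith)) hy').le
  linarith

lemma fB_neg {x : ℝ} (hx : 0 < x) {ν : ℝ} (hν : ν < 1/2) : fB ν x < 0 := by
  have hmono : StrictMonoOn (fB ν) (Set.Ioi 0) := by
    apply strictMonoOn_of_deriv_pos (convex_Ioi 0)
    · exact fun y hy => (fB_hasDerivAt hy ν).continuousAt.continuousWithinAt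
    · intro y hy
      rw [interior_Ioi] at hy
      rw [fB_deriv_eq hy ν]
      have := besselK_pos hy (ν-1)
      have := besselK_pos hy ν
      have h1 : 0 < 1-2*ν := by linarith
      have h2 : -(2*ν-1) * (besselK (ν-1) y * besselK ν y) / y
          = (1-2*ν) * (besselK (ν-1) y * besselK ν y) / y := by ring
      have hy0 : (0:ℝ) < y := hy
      rw [h2]
      exact div_pos (mul_pos h1 (mul_pos (by assumption) (by assumption))) hy0
  have h1 : fB ν x < fB ν (x+1) := hmono (Set.mem_Ioi.2 hx) (Set.mem_Ioi.2 (by linarith)) (lt_add_one x)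
  have h2 : fB ν (x+1) ≤ 0 := by
    refine ge_of_tendsto (fB_tendsto ν) ?_
    filter_upwards [eventually_ge_atTop (x+1)] with y hy
    rcases eq_or_lt_of_le hy with rfl | hy'
    · exact le_refl _
    · exact (hmono (Set.mem_Ioi.2 (by linarith)) (Set.mem_Ioi.2 (by linarith)) hy').le
  linarith

lemma fB_zero {x : ℝ} (hx : 0 < x) : fB (1/2) x = 0 := by
  have hconst : ∀ y : ℝ, x ≤ y → fB (1/2) y = fB (1/2) x := by
    have hmono : MonotoneOn (fB (1/2)) (Set.Ioi 0) := by
      apply monotoneOn_of_deriv_nonneg (convex_Ioi 0)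
      · exact fun y hy => (fB_hasDerivAt hy (1/2)).continuousAt.continuousWithinAt
      · intro y hy
        rw [interior_Ioi] at hy
        exact (fB_hasDerivAt hy (1/2)).differentiableAt.differentiableWithinAt
      · intro y hy
        rw [interior_Ioi] at hy
        rw [fB_deriv_eq hy (1/2)]
        norm_num
    have hanti : AntitoneOn (fB (1/2)) (Set.Ioi 0) := by
      apply antitoneOn_of_deriv_nonpos (convex_Ioi 0)
      · exact fun y hy => (fB_hasDerivAt hy (1/2)).continuousAt.continuousWithinAt
      · intro y hy
        rw [interior_Ioi] at hy
        exact (fB_hasDerivAt hy (1/2)).differentiableAt.differentiableWithinAt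
      · intro y hy
        rw [interior_Ioi] at hy
        rw [fB_deriv_eq hy (1/2)]
        norm_num
    intro y hy
    have hym : y ∈ Set.Ioi (0:ℝ) := Set.mem_Ioi.2 (by linarith)
    have hxm : x ∈ Set.Ioi (0:ℝ) := Set.mem_Ioi.2 hx
    exact le_antisymm (hanti hxm hym hy) (hmono hxm hym hy)
  have hev : fB (1/2) =ᶠ[atTop] fun _ => fB (1/2) x := by
    filter_upwards [eventually_ge_atTop x] with y hy
    exact hconst y hy
  have := (fB_tendsto (1/2)).congr' hev
  exact tendsto_nhds_unique (l := atTop) tendsto_const_nhds this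

theorem stmt_4 (ν x : ℝ) (hx : 0 < x) :
    (3 / 2 < ν → besselK (ν - 1) x / besselK ν x <
      x / (ν - 1 / 2 + Real.sqrt ((ν - 3 / 2) ^ 2 + x ^ 2))) ∧
    (ν = 3 / 2 → besselK (ν - 1) x / besselK ν x =
      x / (ν - 1 / 2 + Real.sqrt ((ν - 3 / 2) ^ 2 + x ^ 2))) ∧
    (ν < 3 / 2 → besselK (ν - 1) x / besselK ν x >
      x / (ν - 1 / 2 + Real.sqrt ((ν - 3 / 2) ^ 2 + x ^ 2))) := by
  set P := besselK (ν - 2) x with hPd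
  set A := besselK (ν - 1) x with hAd
  set B := besselK ν x with hBd
  have hP : 0 < P := besselK_pos hx _
  have hA : 0 < A := besselK_pos hx _
  have hB : 0 < B := besselK_pos hx _
  set s : ℝ := ν - 3/2 with hsd
  set R : ℝ := Real.sqrt ((ν - 3/2) ^ 2 + x ^ 2) with hRd
  have hR0 : 0 ≤ R := Real.sqrt_nonneg _
  have hRsq : R ^ 2 = s ^ 2 + x ^ 2 := Real.sq_sqrt (by positivity)
  have hRgt : |s| < R := by
    have h1 : Real.sqrt (s^2) < Real.sqrt (s^2 + x^2) := by
      apply Real.sqrt_lt_sqrt (by positivity)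
      nlinarith
    rwa [Real.sqrt_sq_eq_abs] at h1
  have hE : 0 < ν - 1/2 + R := by
    have h1 : -R < ν - 3/2 := hsd ▸ (abs_lt.1 hRgt).1
    linarith
  -- recurrence at ν - 1 : x * (B - P) = 2*(ν-1)*A
  have hrec : x * (B - P) = 2 * (ν - 1) * A := by
    have h := besselK_recurrence hx (ν - 1)
    have e1 : ν - 1 + 1 = ν := by ring
    have e2 : ν - 1 - 1 = ν - 2 := by ring
    rw [e1, e2] at h
    exact h
  have hfB : fB (ν-1) x = x * P^2 + 2*s*(P*A) - x*A^2 := by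
    rw [fB]
    have e2 : ν - 1 - 1 = ν - 2 := by ring
    rw [e2, ← hPd, ← hAd, hsd]
    ring
  refine ⟨?_, ?_, ?_⟩
  · intro hν
    have hs : 0 < s := by rw [hsd]; linarith
    have hfpos : 0 < x * P^2 + 2*s*(P*A) - x*A^2 := by
      rw [← hfB]; exact fB_pos hx (by linarith : 1/2 < ν - 1)
    rw [div_lt_div_iff₀ hB hE]
    -- goal : A * (ν - 1/2 + R) < x * B
    have hxB : x * B = x * P + 2*(ν-1)*A := by linarith
    have hkey : A * R < x * P + s * A := by
      have hrhs : 0 < x * P + s * A := by positivity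
      have hsq : (A * R)^2 < (x * P + s * A)^2 := by nlinarith [mul_pos hx hfpos]
      exact lt_of_pow_lt_pow_left₀ 2 hrhs.le hsq
    have : A * (ν - 1/2 + R) = A * R + (ν - 1/2) * A := by ring
    rw [this, hxB]
    rw [hsd] at hkey
    linarith
  · intro hν
    have hs0 : s = 0 := by rw [hsd, hν]; ring
    have hPA : P = A := by
      have h0 : fB (ν-1) x = 0 := by
        have : ν - 1 = 1/2 := by rw [hν]; norm_num
        rw [this]; exact fB_zero hx
      rw [hfB, hs0] at h0
      have h2 : P^2 = A^2 := mul_left_cancel₀ (ne_of_gt hx) (by linarith : x * P^2 = x * A^2)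
      have h3 : (P - A) * (P + A) = 0 := by linear_combination h2
      rcases mul_eq_zero.1 h3 with h | h
      · linarith
      · linarith
    have hxB : x * B = x * P + 2*(ν-1)*A := by linarith
    rw [div_eq_div_iff (ne_of_gt hB) (ne_of_gt hE)]
    -- A * (ν - 1/2 + R) = x * B
    have hRx : R = x := by
      rw [hRd, hν]
      norm_num
      exact Real.sqrt_sq hx.le
    rw [hRx, hxB, hPA, hν]
    ring
  · intro hν
    have hs : s < 0 := by rw [hsd]; linarith
    have hfneg : x * P^2 + 2*s*(P*A) - x*A^2 < 0 := by
      rw [← hfB]; exact fB_neg hx (by rw [hsd] at hs; linarith : ν - 1 < 1/2)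
    rw [gt_iff_lt, div_lt_div_iff₀ hE hB]
    -- goal : x * B < A * (ν - 1/2 + R)
    have hxB : x * B = x * P + 2*(ν-1)*A := by linarith
    have hkey : x * P + s * A < A * R := by
      have hsq : (x * P + s * A)^2 < (A * R)^2 := by nlinarith [mul_pos hx (neg_pos.2 hfneg)]
      have hAR : 0 ≤ A * R := by positivity
      exact lt_of_pow_lt_pow_left₀ 2 hAR hsq
    have heq : A * (ν - 1/2 + R) = A * R + (ν - 1/2) * A := by ring
    rw [heq, hxB]
    rw [hsd] at hkey
    linarith
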